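/- Let F be an algebraically closed field of characteristic different from 2 and let l ≥ 2. Then the normalizer of T̄ in O_J is the internal semidirect product of T̄ by V̄; that is: V̄ ⊆ N_{O_J}(T̄), T̄ ∩ V̄ = {1}, and every element of N_{O_J}(T̄) can be written as t·v with t ∈ T̄ and v ∈ V̄. -/

import Mathlib

open Matrix

noncomputable section

variable (n : ℕ) (F : Type) [Field F]

/-- The antidiagonal matrix `J`: entry `(i,j)` (1-based) is `1` iff `i + j = n + 1`. -/
def Jmat : Matrix (Fin n) (Fin n) F :=
  Matrix.of fun i j => if (i : ℕ) + (j : ℕ) + 1 = n then 1 else 0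

/-- The permutation `ι` of `{1,…,n}` given (1-based) by `i ↦ n + 1 - i`. -/
def iotaPerm : Equiv.Perm (Fin n) where
  toFun i := ⟨n - 1 - (i : ℕ), by have := i.isLt; omega⟩
  invFun i := ⟨n - 1 - (i : ℕ), by have := i.isLt; omega⟩
  left_inv i := by have := i.isLt; apply Fin.ext; show n - 1 - (n - 1 - (i : ℕ)) = _; omega
  right_inv i := by have := i.isLt; apply Fin.ext; show n - 1 - (n - 1 - (i : ℕ)) = _; omega

/-- The permutation matrix `P_σ`, with `(i,j)` entry `1` iff `i = σ j`. -/
def permMat (σ : Equiv.Perm (Fin n)) : Matrix (Fin n) (Fin n) F :=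
  Matrix.of fun i j => if i = σ j then 1 else 0

lemma permMat_mul (σ τ : Equiv.Perm (Fin n)) :
    permMat n F σ * permMat n F τ = permMat n F (σ * τ) := by
  ext i j
  simp only [permMat, Matrix.mul_apply, Matrix.of_apply]
  rw [Finset.sum_eq_single (τ j)]
  · simp [Equiv.Perm.mul_apply] <;> (split_ifs <;> simp_all)
  · intro k _ hk; simp [hk]
  · intro h; simp at h

lemma permMat_one : permMat n F 1 = 1 := by
  ext i j
  simp [permMat, Matrix.one_apply] <;> (split_ifs <;> simp_all)

/-- The permutation matrix `P_σ` as an element of `GL_n(F)`. -/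
def permGL (σ : Equiv.Perm (Fin n)) : GL (Fin n) F :=
  ⟨permMat n F σ, permMat n F σ⁻¹,
    by rw [permMat_mul]; simp [permMat_one],
    by rw [permMat_mul]; simp [permMat_one]⟩

/-- The orthogonal group `O_J = {x ∈ GL_n(F) : xᵀ J x = J}` as a subgroup of `GL_n(F)`. -/
def OJ : Subgroup (GL (Fin n) F) where
  carrier := {x | (x : Matrix (Fin n) (Fin n) F)ᵀ * Jmat n F * (x : Matrix (Fin n) (Fin n) F) = Jmat n F}
  one_mem' := by simp
  mul_mem' := by
    intro a b ha hb
    simp only [Set.mem_setOf_eq] at ha hb ⊢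
    rw [Units.val_mul, transpose_mul]
    calc (b : Matrix (Fin n) (Fin n) F)ᵀ * (a : Matrix (Fin n) (Fin n) F)ᵀ * Jmat n F *
          ((a : Matrix (Fin n) (Fin n) F) * (b : Matrix (Fin n) (Fin n) F))
        = (b : Matrix (Fin n) (Fin n) F)ᵀ *
            ((a : Matrix (Fin n) (Fin n) F)ᵀ * Jmat n F * (a : Matrix (Fin n) (Fin n) F)) *
            (b : Matrix (Fin n) (Fin n) F) := by noncomm_ring
      _ = Jmat n F := by rw [ha, hb]
  inv_mem' := by
    intro a ha
    simp only [Set.mem_setOf_eq] at ha ⊢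
    calc ((a⁻¹ : GL (Fin n) F) : Matrix (Fin n) (Fin n) F)ᵀ * Jmat n F *
          ((a⁻¹ : GL (Fin n) F) : Matrix (Fin n) (Fin n) F)
        = ((a⁻¹ : GL (Fin n) F) : Matrix (Fin n) (Fin n) F)ᵀ *
            ((a : Matrix (Fin n) (Fin n) F)ᵀ * Jmat n F * (a : Matrix (Fin n) (Fin n) F)) *
            ((a⁻¹ : GL (Fin n) F) : Matrix (Fin n) (Fin n) F) := by rw [ha]
      _ = ((a : Matrix (Fin n) (Fin n) F) * ((a⁻¹ : GL (Fin n) F) : Matrix (Fin n) (Fin n) F))ᵀ *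
            Jmat n F *
            ((a : Matrix (Fin n) (Fin n) F) * ((a⁻¹ : GL (Fin n) F) : Matrix (Fin n) (Fin n) F)) := by
          rw [transpose_mul]; noncomm_ring
      _ = Jmat n F := by rw [Units.mul_inv]; simp

/-- `SL_n(F)` viewed as a subgroup of `GL_n(F)`. -/
def SLgl : Subgroup (GL (Fin n) F) where
  carrier := {x | (x : Matrix (Fin n) (Fin n) F).det = 1}
  one_mem' := by simp
  mul_mem' := by
    intro a b ha hb
    simp only [Set.mem_setOf_eq] at ha hb ⊢
    rw [Units.val_mul, det_mul, ha, hb, one_mul]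
  inv_mem' := by
    intro a ha
    simp only [Set.mem_setOf_eq] at ha ⊢
    have h : ((a : Matrix (Fin n) (Fin n) F) * ((a⁻¹ : GL (Fin n) F) : Matrix (Fin n) (Fin n) F)).det = 1 := by
      rw [Units.mul_inv]; simp
    rw [det_mul, ha, one_mul] at h
    exact h

/-- `SO_J := O_J ∩ SL_n(F)`. -/
def SOJ : Subgroup (GL (Fin n) F) := OJ n F ⊓ SLgl n F

/-- The diagonal matrices lying in a subgroup `G` of `GL_n(F)` form a subgroup. -/
def diagIn (G : Subgroup (GL (Fin n) F)) : Subgroup (GL (Fin n) F) where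
  carrier := {x | x ∈ G ∧ (x : Matrix (Fin n) (Fin n) F).IsDiag}
  one_mem' := ⟨one_mem _, Matrix.isDiag_one⟩
  mul_mem' := by
    rintro a b ⟨haG, haD⟩ ⟨hbG, hbD⟩
    refine ⟨mul_mem haG hbG, ?_⟩
    rw [Units.val_mul, ← haD.diagonal_diag, ← hbD.diagonal_diag, diagonal_mul_diagonal]
    exact isDiag_diagonal _
  inv_mem' := by
    rintro a ⟨haG, haD⟩
    refine ⟨inv_mem haG, ?_⟩
    rw [Matrix.coe_units_inv, ← haD.diagonal_diag, inv_diagonal]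
    exact isDiag_diagonal _

/-- `T̄`, the subgroup of all diagonal matrices contained in `O_J`. -/
def Tbar : Subgroup (GL (Fin n) F) := diagIn n F (OJ n F)

/-- `V̄ = {P_σ : σ ∘ ι = ι ∘ σ}` as a subgroup of `GL_n(F)`. -/
def Vbar : Subgroup (GL (Fin n) F) where
  carrier := {x | ∃ σ : Equiv.Perm (Fin n),
      σ * iotaPerm n = iotaPerm n * σ ∧ (x : Matrix (Fin n) (Fin n) F) = permMat n F σ}
  one_mem' := ⟨1, by simp, by simp [permMat_one]⟩
  mul_mem' := by
    rintro a b ⟨σ, hσ, ha⟩ ⟨τ, hτ, hb⟩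
    refine ⟨σ * τ, ?_, ?_⟩
    · rw [mul_assoc, hτ, ← mul_assoc, hσ, mul_assoc]
    · rw [Units.val_mul, ha, hb, permMat_mul]
  inv_mem' := by
    rintro a ⟨σ, hσ, ha⟩
    have hau : a = permGL n F σ := Units.ext ha
    exact ⟨σ⁻¹, (Commute.inv_left hσ : _), by rw [hau]; rfl⟩

/-- `W̄ := V̄ ∩ SL_n(F)`. -/
def Wbar : Subgroup (GL (Fin n) F) := Vbar n F ⊓ SLgl n F

end

namespace NormalizerAux

variable (n : ℕ) (F : Type) [Field F]

lemma iota_iota (i : Fin n) : iotaPerm n (iotaPerm n i) = i := by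
  have := i.isLt
  apply Fin.ext
  show n - 1 - (n - 1 - (i : ℕ)) = (i : ℕ)
  omega

lemma Jmat_apply (i j : Fin n) :
    Jmat n F i j = if j = iotaPerm n i then (1 : F) else 0 := by
  have hi := i.isLt
  have hj := j.isLt
  have hcond : ((i : ℕ) + (j : ℕ) + 1 = n) ↔ j = iotaPerm n i := by
    rw [Fin.ext_iff]
    show _ ↔ (j : ℕ) = n - 1 - (i : ℕ)
    omega
  simp only [Jmat, Matrix.of_apply, hcond]

lemma permMat_transpose (σ : Equiv.Perm (Fin n)) :
    (permMat n F σ)ᵀ = permMat n F σ⁻¹ := by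
  ext i j
  simp only [permMat, transpose_apply, Matrix.of_apply]
  refine if_congr ?_ rfl rfl
  constructor
  · intro h; simp [h]
  · intro h; simp [h]

lemma mul_permMat_apply (M : Matrix (Fin n) (Fin n) F) (σ : Equiv.Perm (Fin n))
    (i j : Fin n) : (M * permMat n F σ) i j = M i (σ j) := by
  rw [mul_apply, Finset.sum_eq_single (σ j)]
  · simp [permMat]
  · intro k _ hk; simp [permMat, hk]
  · simp

lemma permMat_mul_apply (M : Matrix (Fin n) (Fin n) F) (σ : Equiv.Perm (Fin n))
    (i j : Fin n) : (permMat n F σ * M) i j = M (σ⁻¹ i) j := by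
  rw [mul_apply, Finset.sum_eq_single (σ⁻¹ i)]
  · simp [permMat]
  · intro k _ hk
    have : i ≠ σ k := fun h => hk (by simp [h])
    simp [permMat, this]
  · simp

lemma diag_OJ_eq (c : Fin n → F) (hc : ∀ i, c i * c (iotaPerm n i) = 1) :
    (diagonal c)ᵀ * Jmat n F * diagonal c = Jmat n F := by
  rw [diagonal_transpose]
  ext i j
  rw [mul_diagonal, diagonal_mul, Jmat_apply]
  by_cases h : j = iotaPerm n i
  · subst h
    rw [if_pos rfl, mul_one]
    exact hc i
  · simp [h]

lemma permGL_mem_OJ (σ : Equiv.Perm (Fin n))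
    (hσ : ∀ i, σ (iotaPerm n i) = iotaPerm n (σ i)) :
    permGL n F σ ∈ OJ n F := by
  show (permMat n F σ)ᵀ * Jmat n F * permMat n F σ = Jmat n F
  rw [permMat_transpose]
  ext i j
  rw [mul_permMat_apply, permMat_mul_apply, inv_inv, Jmat_apply, Jmat_apply, ← hσ i]
  exact if_congr σ.apply_eq_iff_eq rfl rfl

lemma conj_isDiag (σ : Equiv.Perm (Fin n)) (M : Matrix (Fin n) (Fin n) F)
    (hM : M.IsDiag) : (permMat n F σ * M * permMat n F σ⁻¹).IsDiag := by
  intro i j hij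
  rw [mul_permMat_apply, permMat_mul_apply]
  exact hM fun h => hij (σ⁻¹.injective h)

lemma conj_mem_Tbar (σ : Equiv.Perm (Fin n))
    (hσ : ∀ i, σ (iotaPerm n i) = iotaPerm n (σ i))
    (h : GL (Fin n) F) (hh : h ∈ Tbar n F) :
    permGL n F σ * h * (permGL n F σ)⁻¹ ∈ Tbar n F := by
  obtain ⟨hO, hD⟩ := hh
  refine ⟨mul_mem (mul_mem (permGL_mem_OJ n F σ hσ) hO)
    (inv_mem (permGL_mem_OJ n F σ hσ)), ?_⟩
  have hcoe : ((permGL n F σ * h * (permGL n F σ)⁻¹ : GL (Fin n) F) :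
      Matrix (Fin n) (Fin n) F)
      = permMat n F σ * (h : Matrix (Fin n) (Fin n) F) * permMat n F σ⁻¹ := rfl
  rw [hcoe]
  exact conj_isDiag n F σ _ hD

lemma exists_good_fun (F : Type) [Field F] [Infinite F] (m : ℕ) :
    ∃ f : Fin m → F, Function.Injective f ∧ (∀ i, f i ≠ 0) ∧
      ∀ i j, f i * f j ≠ 1 := by
  induction m with
  | zero => exact ⟨Fin.elim0, fun i => i.elim0, fun i => i.elim0, fun i => i.elim0⟩
  | succ m ih =>
    obtain ⟨f, hinj, h0, h1⟩ := ih
    have hsub : {x : F | x * x = 1} ⊆ {1, -1} := by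
      intro x hx
      rcases mul_self_eq_one_iff.mp hx with h | h <;> simp [h]
    have hfin : ({0} ∪ Set.range f ∪ Set.range (fun i => (f i)⁻¹)
        ∪ {x : F | x * x = 1}).Finite :=
      ((((Set.finite_singleton 0).union (Set.finite_range f)).union
        (Set.finite_range _)).union
        (((Set.finite_singleton (-1 : F)).insert 1).subset hsub))
    obtain ⟨a, ha⟩ := hfin.infinite_compl.nonempty
    simp only [Set.mem_compl_iff, Set.mem_union, Set.mem_singleton_iff,
      Set.mem_range, Set.mem_setOf_eq, not_or, not_exists] at ha
    obtain ⟨⟨⟨ha0, haf⟩, hafi⟩, haa⟩ := ha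
    refine ⟨Fin.cons a f, ?_, ?_, ?_⟩
    · intro i j hij
      induction i using Fin.cases with
      | zero =>
        induction j using Fin.cases with
        | zero => rfl
        | succ j => rw [Fin.cons_zero, Fin.cons_succ] at hij; exact absurd hij.symm (haf j)
      | succ i =>
        induction j using Fin.cases with
        | zero => rw [Fin.cons_zero, Fin.cons_succ] at hij; exact absurd hij (haf i)
        | succ j => rw [Fin.cons_succ, Fin.cons_succ] at hij; rw [hinj hij]
    · intro i
      induction i using Fin.cases with
      | zero => rw [Fin.cons_zero]; exact ha0
      | succ i => rw [Fin.cons_succ]; exact h0 i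
    · intro i j
      induction i using Fin.cases with
      | zero =>
        induction j using Fin.cases with
        | zero => rw [Fin.cons_zero]; exact haa
        | succ j =>
          rw [Fin.cons_zero, Fin.cons_succ]
          intro h
          exact hafi j (eq_inv_of_mul_eq_one_left h).symm
      | succ i =>
        induction j using Fin.cases with
        | zero =>
          rw [Fin.cons_zero, Fin.cons_succ]
          intro h
          exact hafi i (eq_inv_of_mul_eq_one_right h).symm
        | succ j => rw [Fin.cons_succ, Fin.cons_succ]; exact h1 i j

lemma exists_good_diag (F : Type) [Field F] [Infinite F] (l : ℕ) :
    ∃ g : Fin (2 * l) → F, Function.Injective g ∧ (∀ i, g i ≠ 0) ∧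
      ∀ i, g i * g (iotaPerm (2 * l) i) = 1 := by
  obtain ⟨f, hinj, h0, h1⟩ := exists_good_fun F l
  refine ⟨fun i => if h : (i : ℕ) < l then f ⟨(i : ℕ), h⟩
      else (f ⟨2 * l - 1 - (i : ℕ), by have := i.isLt; omega⟩)⁻¹, ?_, ?_, ?_⟩
  · intro i j hij
    simp only at hij
    have hi := i.isLt; have hj := j.isLt
    by_cases h1i : (i : ℕ) < l <;> by_cases h1j : (j : ℕ) < l
    · rw [dif_pos h1i, dif_pos h1j] at hij
      have h2 := hinj hij
      have h3 : (i : ℕ) = (j : ℕ) := by simpa using congrArg Fin.val h2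
      exact Fin.ext h3
    · rw [dif_pos h1i, dif_neg h1j] at hij
      exfalso
      apply h1 ⟨(i : ℕ), h1i⟩ ⟨2 * l - 1 - (j : ℕ), by omega⟩
      rw [hij]
      exact inv_mul_cancel₀ (h0 _)
    · rw [dif_neg h1i, dif_pos h1j] at hij
      exfalso
      apply h1 ⟨(j : ℕ), h1j⟩ ⟨2 * l - 1 - (i : ℕ), by omega⟩
      rw [← hij]
      exact inv_mul_cancel₀ (h0 _)
    · rw [dif_neg h1i, dif_neg h1j] at hij
      have h2 := hinj (inv_injective hij)
      have h3 : 2 * l - 1 - (i : ℕ) = 2 * l - 1 - (j : ℕ) := by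
        simpa using congrArg Fin.val h2
      exact Fin.ext (by omega)
  · intro i
    simp only
    by_cases h : (i : ℕ) < l
    · rw [dif_pos h]; exact h0 _
    · rw [dif_neg h]; exact inv_ne_zero (h0 _)
  · intro i
    simp only
    have hi := i.isLt
    have hι : ((iotaPerm (2 * l) i : Fin (2 * l)) : ℕ) = 2 * l - 1 - (i : ℕ) := rfl
    by_cases h : (i : ℕ) < l
    · have hιge : ¬ ((iotaPerm (2 * l) i : Fin (2 * l)) : ℕ) < l := by rw [hι]; omega
      rw [dif_pos h, dif_neg hιge]
      have harg : (⟨2 * l - 1 - ((iotaPerm (2 * l) i : Fin (2 * l)) : ℕ), by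
          have := (iotaPerm (2 * l) i).isLt; omega⟩ : Fin l) = ⟨(i : ℕ), h⟩ := by
        apply Fin.ext
        simp only [hι]
        omega
      rw [harg]
      exact mul_inv_cancel₀ (h0 _)
    · have hιlt : ((iotaPerm (2 * l) i : Fin (2 * l)) : ℕ) < l := by rw [hι]; omega
      rw [dif_neg h, dif_pos hιlt]
      have harg : (⟨((iotaPerm (2 * l) i : Fin (2 * l)) : ℕ), hιlt⟩ : Fin l)
          = ⟨2 * l - 1 - (i : ℕ), by omega⟩ := by
        apply Fin.ext
        simp only [hι]
      rw [harg]
      exact inv_mul_cancel₀ (h0 _)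

end NormalizerAux

open NormalizerAux

/-- For `F` algebraically closed of characteristic `≠ 2` and `l ≥ 2`,
the normalizer of `T̄` in `O_J` is the internal semidirect product of `T̄` by `V̄`. -/
theorem normalizer_Tbar_in_OJ_eq_Tbar_mul_Vbar
    (F : Type) [Field F] [IsAlgClosed F] (hchar : ringChar F ≠ 2)
    (l : ℕ) (hl : 2 ≤ l) :
    Vbar (2 * l) F ≤ OJ (2 * l) F ⊓ Subgroup.normalizer (Tbar (2 * l) F : Set (GL (Fin (2 * l)) F)) ∧
    Tbar (2 * l) F ⊓ Vbar (2 * l) F = ⊥ ∧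
    ∀ x ∈ OJ (2 * l) F ⊓ Subgroup.normalizer (Tbar (2 * l) F : Set (GL (Fin (2 * l)) F)),
      ∃ t ∈ Tbar (2 * l) F, ∃ v ∈ Vbar (2 * l) F, x = t * v := by
  clear hchar hl
  refine ⟨?_, ?_, ?_⟩
  · -- V̄ ≤ O_J ⊓ N(T̄)
    rintro v ⟨σ, hσc, hval⟩
    have hvu : v = permGL (2 * l) F σ := Units.ext hval
    have hσ : ∀ i, σ (iotaPerm (2 * l) i) = iotaPerm (2 * l) (σ i) := by
      intro i
      have h2 := DFunLike.congr_fun hσc i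
      simpa [Equiv.Perm.mul_apply] using h2
    have hσ' : ∀ i, σ⁻¹ (iotaPerm (2 * l) i) = iotaPerm (2 * l) (σ⁻¹ i) := by
      intro i
      have h2 := hσ (σ⁻¹ i)
      rw [show σ (σ⁻¹ i) = i from (Equiv.eq_symm_apply σ).mp rfl] at h2
      rw [← h2]; exact Equiv.Perm.inv_eq_iff_eq.mpr rfl
    subst hvu
    rw [Subgroup.mem_inf]
    refine ⟨permGL_mem_OJ _ F σ hσ, ?_⟩
    rw [Subgroup.mem_normalizer_iff]
    intro h
    constructor
    · exact fun hh => conj_mem_Tbar _ F σ hσ h hh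
    · intro hh
      have h3 := conj_mem_Tbar _ F σ⁻¹ hσ' _ hh
      have hinv : permGL (2 * l) F σ⁻¹ = (permGL (2 * l) F σ)⁻¹ := Units.ext rfl
      rw [hinv] at h3
      have h4 : (permGL (2 * l) F σ)⁻¹ * (permGL (2 * l) F σ * h * (permGL (2 * l) F σ)⁻¹) *
          ((permGL (2 * l) F σ)⁻¹)⁻¹ = h := by group
      rwa [h4] at h3
  · -- T̄ ⊓ V̄ = ⊥
    rw [eq_bot_iff]
    rintro x ⟨⟨-, hD⟩, σ, -, hval⟩
    rw [Subgroup.mem_bot]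
    apply Units.ext
    rw [hval] at hD
    have hσ1 : σ = 1 := by
      apply Equiv.ext
      intro j
      simp only [Equiv.Perm.coe_one, id_eq]
      by_contra hne
      have h0 : (1 : F) = 0 := by simpa [permMat] using hD hne
      exact one_ne_zero h0
    rw [hval, hσ1, permMat_one, Units.val_one]
  · -- factorization
    intro x hx
    obtain ⟨hxO, hxN⟩ := Subgroup.mem_inf.mp hx
    have hXO : (x : Matrix (Fin (2 * l)) (Fin (2 * l)) F)ᵀ * Jmat (2 * l) F *
        (x : Matrix (Fin (2 * l)) (Fin (2 * l)) F) = Jmat (2 * l) F := hxO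
    obtain ⟨g, hginj, hg0, hg1⟩ := exists_good_diag F l
    have hgg : diagonal g * diagonal (fun i => (g i)⁻¹) = 1 := by
      rw [diagonal_mul_diagonal, ← diagonal_one]
      have h4 : (fun i => g i * (g i)⁻¹) = fun _ => (1 : F) :=
        funext fun i => mul_inv_cancel₀ (hg0 i)
      rw [h4]
    have hgg' : diagonal (fun i => (g i)⁻¹) * diagonal g = 1 := by
      rw [diagonal_mul_diagonal, ← diagonal_one]
      have h4 : (fun i => (g i)⁻¹ * g i) = fun _ => (1 : F) :=
        funext fun i => inv_mul_cancel₀ (hg0 i)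
      rw [h4]
    set u : GL (Fin (2 * l)) F := ⟨diagonal g, diagonal (fun i => (g i)⁻¹), hgg, hgg'⟩ with hu
    have huT : u ∈ Tbar (2 * l) F := ⟨diag_OJ_eq _ F g hg1, isDiag_diagonal g⟩
    obtain ⟨-, hWdiag⟩ := (Subgroup.mem_normalizer_iff.mp hxN u).mp huT
    set X : Matrix (Fin (2 * l)) (Fin (2 * l)) F :=
      (x : Matrix (Fin (2 * l)) (Fin (2 * l)) F) with hXdef
    set e : Fin (2 * l) → F :=
      fun i => ((x * u * x⁻¹ : GL (Fin (2 * l)) F) : Matrix (Fin (2 * l)) (Fin (2 * l)) F) i i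
      with hedef
    have hWd : diagonal e
        = ((x * u * x⁻¹ : GL (Fin (2 * l)) F) : Matrix (Fin (2 * l)) (Fin (2 * l)) F) :=
      hWdiag.diagonal_diag
    have hrel : X * diagonal g = diagonal e * X := by
      have h1 : x * u = x * u * x⁻¹ * x := by group
      have h2 : ((x : GL (Fin (2 * l)) F) : Matrix (Fin (2 * l)) (Fin (2 * l)) F) *
          ((u : GL (Fin (2 * l)) F) : Matrix (Fin (2 * l)) (Fin (2 * l)) F)
          = ((x * u * x⁻¹ : GL (Fin (2 * l)) F) : Matrix (Fin (2 * l)) (Fin (2 * l)) F) *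
            ((x : GL (Fin (2 * l)) F) : Matrix (Fin (2 * l)) (Fin (2 * l)) F) := by
        rw [← Units.val_mul, ← Units.val_mul]
        exact congrArg Units.val h1
      rw [hWd]
      exact h2
    have hkey : ∀ i j, X i j ≠ 0 → g j = e i := by
      intro i j hne
      have h3 := congrFun (congrFun hrel i) j
      rw [mul_diagonal, diagonal_mul] at h3
      exact mul_left_cancel₀ hne (h3.trans (mul_comm (e i) (X i j)))
    have hdet : X.det ≠ 0 := by
      have hXu : IsUnit X := Units.isUnit x
      exact ((Matrix.isUnit_iff_isUnit_det X).mp hXu).ne_zero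
    have hrow : ∀ i, ∃ j, X i j ≠ 0 := by
      intro i
      by_contra hc
      push_neg at hc
      exact hdet (Matrix.det_eq_zero_of_row_eq_zero i hc)
    choose τ hτ using hrow
    have huniq : ∀ i j, X i j ≠ 0 → j = τ i := by
      intro i j hne
      exact hginj ((hkey i j hne).trans (hkey i (τ i) (hτ i)).symm)
    have hτsurj : Function.Surjective τ := by
      intro j
      by_contra hc
      push_neg at hc
      apply hdet
      apply Matrix.det_eq_zero_of_column_eq_zero j
      intro i
      by_contra hne
      exact hc i (huniq i j hne).symm
    have hτinj : Function.Injective τ := Finite.injective_iff_surjective.mpr hτsurj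
    set σ0 : Equiv.Perm (Fin (2 * l)) := Equiv.ofBijective τ ⟨hτinj, hτsurj⟩ with hσ0
    set σ : Equiv.Perm (Fin (2 * l)) := σ0⁻¹ with hσdef
    have hστ : ∀ i, σ (τ i) = i := fun i => σ0.symm_apply_apply i
    have hτσ : ∀ j, τ (σ j) = j := fun j => σ0.apply_symm_apply j
    set c : Fin (2 * l) → F := fun i => X i (τ i) with hcdef
    have hXeq : X = diagonal c * permMat (2 * l) F σ := by
      ext i j
      rw [diagonal_mul]
      by_cases h : i = σ j
      · have hji : j = τ i := by rw [h, hτσ]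
        have h1 : permMat (2 * l) F σ i j = 1 := by simp [permMat, h]
        rw [h1, mul_one, hji]
      · have h1 : permMat (2 * l) F σ i j = 0 := by simp [permMat, h]
        rw [h1, mul_zero]
        by_contra hne
        exact h (by rw [huniq i j hne, hστ i])
    have hOJ2 : permMat (2 * l) F σ⁻¹ * (diagonal c * Jmat (2 * l) F * diagonal c) *
        permMat (2 * l) F σ = Jmat (2 * l) F := by
      have h2 := hXO
      rw [hXeq, transpose_mul, diagonal_transpose, permMat_transpose] at h2
      simp only [mul_assoc] at h2 ⊢
      exact h2
    have hA : ∀ a b, (diagonal c * Jmat (2 * l) F * diagonal c) a b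
        = if b = iotaPerm (2 * l) a then c a * c b else 0 := by
      intro a b
      rw [mul_diagonal, diagonal_mul, Jmat_apply]
      by_cases h : b = iotaPerm (2 * l) a
      · rw [if_pos h, if_pos h, mul_one]
      · rw [if_neg h, if_neg h, mul_zero, zero_mul]
    have hEntry : ∀ i j, (if σ j = iotaPerm (2 * l) (σ i) then c (σ i) * c (σ j) else 0)
        = (if j = iotaPerm (2 * l) i then (1 : F) else 0) := by
      intro i j
      have h3 := congrFun (congrFun hOJ2 i) j
      rw [mul_permMat_apply, permMat_mul_apply, inv_inv, hA, Jmat_apply] at h3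
      exact h3
    have hcomm : ∀ i, σ (iotaPerm (2 * l) i) = iotaPerm (2 * l) (σ i) := by
      intro i
      have h3 := hEntry i (iotaPerm (2 * l) i)
      rw [if_pos rfl] at h3
      by_contra hne
      rw [if_neg hne] at h3
      exact one_ne_zero h3.symm
    have hc1 : ∀ k, c k * c (iotaPerm (2 * l) k) = 1 := by
      intro k
      have h3 := hEntry (σ⁻¹ k) (iotaPerm (2 * l) (σ⁻¹ k))
      rw [hcomm (σ⁻¹ k), show σ (σ⁻¹ k) = k from (Equiv.eq_symm_apply σ).mp rfl] at h3
      simpa using h3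
    have hσcomm : σ * iotaPerm (2 * l) = iotaPerm (2 * l) * σ := by
      apply Equiv.ext
      intro i
      simpa [Equiv.Perm.mul_apply] using hcomm i
    have htval : ((x * (permGL (2 * l) F σ)⁻¹ : GL (Fin (2 * l)) F) :
        Matrix (Fin (2 * l)) (Fin (2 * l)) F) = diagonal c := by
      have h5 : ((x * (permGL (2 * l) F σ)⁻¹ : GL (Fin (2 * l)) F) :
          Matrix (Fin (2 * l)) (Fin (2 * l)) F) = X * permMat (2 * l) F σ⁻¹ := rfl
      rw [h5, hXeq, mul_assoc, permMat_mul, mul_inv_cancel, permMat_one, mul_one]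
    refine ⟨x * (permGL (2 * l) F σ)⁻¹, ⟨?_, ?_⟩, permGL (2 * l) F σ, ⟨σ, hσcomm, rfl⟩, ?_⟩
    · show ((x * (permGL (2 * l) F σ)⁻¹ : GL (Fin (2 * l)) F) :
          Matrix (Fin (2 * l)) (Fin (2 * l)) F)ᵀ * Jmat (2 * l) F *
          ((x * (permGL (2 * l) F σ)⁻¹ : GL (Fin (2 * l)) F) :
          Matrix (Fin (2 * l)) (Fin (2 * l)) F) = Jmat (2 * l) F
      rw [htval]
      exact diag_OJ_eq _ F c hc1
    · show (((x * (permGL (2 * l) F σ)⁻¹ : GL (Fin (2 * l)) F) :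
          Matrix (Fin (2 * l)) (Fin (2 * l)) F)).IsDiag
      rw [htval]
      exact isDiag_diagonal c
    · exact (inv_mul_cancel_right x (permGL (2 * l) F σ)).symm
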